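/- (Corollary 6.4, nonconvex part: possibly biased intermittent perturbations.) Under Assumptions (A1)–(A3), suppose the perturbations are uniformly bounded, ‖δ_i^{(t)}‖ ≤ D and ‖ε_i^{(t)}‖ ≤ D almost surely (no zero-mean assumption). Let Q_δ and Q_ε be the numbers of pairs (t, i), t ∈ {0,…,T−1}, at which δ_i^{(t)} and ε_i^{(t)} respectively are not identically zero. Then for every A > 0 there exist c, C > 0, depending only on N, L_{∇ℓ}, σ, Δ₀, D, the operator constants of (A3), and A, such that for every T ≥ 1, if γ = min{1/(3L_{∇ℓ}), c T^{−1/2}}, Q_δ ≤ A T^{1/2} and Q_ε ≤ A T^{1/2}, then (1/T) Σ_{t=0}^{T−1} E[‖∇ℓ(w^{(t)})‖²] ≤ C T^{−1/2}. -/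

import Mathlib

set_option maxHeartbeats 1000000


open MeasureTheory
open scoped BigOperators

noncomputable section

/-- The stacked parameter space `ℝ^{d_{w_1}} × ⋯ × ℝ^{d_{w_N}}` (with the `ℓ²` product
structure); component `j : Fin N` holds the weight `w_{j+1}` of the `(j+1)`-st operator. -/
abbrev ParamSpace (N : ℕ) (dw : ℕ → ℕ) : Type :=
  PiLp 2 (fun j : Fin N => EuclideanSpace ℝ (Fin (dw (j.1 + 1))))

/-- The Frobenius norm of a (continuous) linear map out of a Euclidean space. -/
noncomputable def frobNorm {n : ℕ} {F : Type*} [NormedAddCommGroup F] [NormedSpace ℝ F]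
    (A : EuclideanSpace ℝ (Fin n) →L[ℝ] F) : ℝ :=
  Real.sqrt (∑ j, ‖A (EuclideanSpace.single j 1)‖ ^ 2)

/-- The Frobenius norm of a third-order tensor, presented as a (continuous) linear map from a
Euclidean space into (continuous) linear maps out of a Euclidean space. -/
noncomputable def frobNorm3 {m q : ℕ} {F : Type*} [NormedAddCommGroup F] [NormedSpace ℝ F]
    (A : EuclideanSpace ℝ (Fin m) →L[ℝ] (EuclideanSpace ℝ (Fin q) →L[ℝ] F)) : ℝ :=
  Real.sqrt (∑ k, ∑ l, ‖A (EuclideanSpace.single k 1) (EuclideanSpace.single l 1)‖ ^ 2)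

local notation "⟪" x ", " y "⟫" => @inner ℝ _ _ x y

lemma apply_le_frobNorm_mul {n : ℕ} {F : Type*} [NormedAddCommGroup F] [NormedSpace ℝ F]
    (A : EuclideanSpace ℝ (Fin n) →L[ℝ] F) (x : EuclideanSpace ℝ (Fin n)) :
    ‖A x‖ ≤ frobNorm A * ‖x‖ := by
  have hx : x = ∑ j, x j • EuclideanSpace.single j 1 := by
    ext k
    rw [WithLp.ofLp_sum, Finset.sum_apply]
    simp [EuclideanSpace.single_apply]
  calc ‖A x‖ = ‖∑ j, x j • A (EuclideanSpace.single j 1)‖ := by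
        conv_lhs => rw [hx]
        rw [map_sum]
        simp
    _ ≤ ∑ j, ‖x j • A (EuclideanSpace.single j 1)‖ := norm_sum_le _ _
    _ = ∑ j, |x j| * ‖A (EuclideanSpace.single j 1)‖ := by simp [norm_smul]
    _ ≤ Real.sqrt (∑ j, |x j| ^ 2) * Real.sqrt (∑ j, ‖A (EuclideanSpace.single j 1)‖ ^ 2) :=
        Real.sum_mul_le_sqrt_mul_sqrt _ _ _
    _ = frobNorm A * ‖x‖ := by
        rw [frobNorm, EuclideanSpace.norm_eq, mul_comm]
        simp [sq_abs]

lemma opNorm_le_frobNorm {n : ℕ} {F : Type*} [NormedAddCommGroup F] [NormedSpace ℝ F]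
    (A : EuclideanSpace ℝ (Fin n) →L[ℝ] F) : ‖A‖ ≤ frobNorm A :=
  A.opNorm_le_bound (Real.sqrt_nonneg _) (apply_le_frobNorm_mul A)



lemma descent_lemma {E : Type*} [NormedAddCommGroup E] [InnerProductSpace ℝ E]
    [CompleteSpace E] {φ : E → ℝ} {L : ℝ}
    (hdiff : Differentiable ℝ φ)
    (hL : 0 ≤ L) (hLip : ∀ p q : E, ‖gradient φ p - gradient φ q‖ ≤ L * ‖p - q‖)
    (w w' : E) :
    φ w' ≤ φ w + ⟪gradient φ w, w' - w⟫ + L * ‖w' - w‖ ^ 2 := by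
  have hfd : ∀ x : E, HasFDerivAt φ (InnerProductSpace.toDual ℝ E (gradient φ x)) x := by
    intro x
    exact hasGradientAt_iff_hasFDerivAt.mp (hdiff x).hasGradientAt
  set c := gradient φ w with hc
  set h : E → ℝ := fun x => φ x - ⟪c, x⟫ with hh
  have hfdh : ∀ x : E, HasFDerivAt h
      ((InnerProductSpace.toDual ℝ E (gradient φ x)) - (InnerProductSpace.toDual ℝ E c)) x := by
    intro x
    exact (hfd x).sub ((InnerProductSpace.toDual ℝ E c).hasFDerivAt)
  have key : ‖h w' - h w‖ ≤ (L * ‖w' - w‖) * ‖w' - w‖ := by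
    apply Convex.norm_image_sub_le_of_norm_fderiv_le
      (fun x _ => (hfdh x).differentiableAt)
      (fun x hx => ?_) (convex_segment w w') (left_mem_segment ℝ w w') (right_mem_segment ℝ w w')
    rw [(hfdh x).fderiv, ← map_sub]
    rw [(InnerProductSpace.toDual ℝ E).norm_map]
    calc ‖gradient φ x - c‖ ≤ L * ‖x - w‖ := hLip x w
      _ ≤ L * ‖w' - w‖ := by
          rcases hx with ⟨a, b, ha, hb, hab, rfl⟩
          have hab' : a = 1 - b := by linarith
          subst hab'
          have heq : (1 - b) • w + b • w' - w = b • (w' - w) := by module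
          rw [heq, norm_smul]
          have hb1 : b ≤ 1 := by linarith
          have hbb : ‖b‖ = b := by rw [Real.norm_eq_abs, abs_of_nonneg hb]
          rw [hbb]
          nlinarith [mul_nonneg hL (norm_nonneg (w' - w)), mul_nonneg (mul_nonneg hL (norm_nonneg (w' - w))) ha]
  have h1 : h w' - h w ≤ (L * ‖w' - w‖) * ‖w' - w‖ := le_trans (le_abs_self _) key
  have h2 : h w' - h w = φ w' - φ w - ⟪c, w' - w⟫ := by
    simp only [hh, inner_sub_right]; ring
  nlinarith [h1, h2]



lemma condexp_clm {Ω : Type*} {m mΩ : MeasurableSpace Ω} {μ : Measure Ω}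
    (hm : m ≤ mΩ) [SigmaFinite (μ.trim hm)]
    {E F : Type*} [NormedAddCommGroup E] [NormedSpace ℝ E] [CompleteSpace E]
    [NormedAddCommGroup F] [NormedSpace ℝ F] [CompleteSpace F]
    (L : E →L[ℝ] F) {f : Ω → E} (hf : Integrable f μ) :
    μ[fun ω => L (f ω)|m] =ᵐ[μ] fun ω => L ((μ[f|m]) ω) := by
  refine (ae_eq_condExp_of_forall_setIntegral_eq hm (L.integrable_comp hf)
    (fun s _ _ => (L.integrable_comp integrable_condExp).integrableOn)
    (fun s hs hμs => ?_)
    ((L.continuous.comp_stronglyMeasurable stronglyMeasurable_condExp).aestronglyMeasurable)).symm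
  rw [L.integral_comp_comm integrable_condExp.integrableOn,
    L.integral_comp_comm hf.integrableOn, setIntegral_condExp hm hf hs]

lemma memL2_integrable_inner {Ω : Type*} {mΩ : MeasurableSpace Ω} {μ : Measure Ω}
    {E : Type*} [NormedAddCommGroup E] [InnerProductSpace ℝ E]
    {f g : Ω → E} (hf : MemLp f 2 μ) (hg : MemLp g 2 μ) :
    Integrable (fun ω => ⟪f ω, g ω⟫) μ := by
  have := L2.integrable_inner (𝕜 := ℝ) (hf.toLp f) (hg.toLp g)
  refine this.congr ?_
  filter_upwards [hf.coeFn_toLp, hg.coeFn_toLp] with ω h1 h2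
  rw [h1, h2]

lemma memL2_integrable_mul {Ω : Type*} {mΩ : MeasurableSpace Ω} {μ : Measure Ω}
    {f g : Ω → ℝ} (hf : MemLp f 2 μ) (hg : MemLp g 2 μ) :
    Integrable (fun ω => f ω * g ω) μ := by
  have := memL2_integrable_inner hf hg
  refine this.congr (Filter.Eventually.of_forall fun ω => ?_)
  simp [RCLike.inner_apply, conj_trivial]
  ring

/-- Tower property: `E⟪G, g⟫ = E‖G‖²` when `μ[g|m] =ᵐ G` and `G` is `m`-measurable. -/
lemma integral_inner_eq_sq_of_condexp {Ω : Type*} {m mΩ : MeasurableSpace Ω} {μ : Measure Ω}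
    [IsProbabilityMeasure μ] (hm : m ≤ mΩ)
    {E : Type*} [NormedAddCommGroup E] [InnerProductSpace ℝ E] [FiniteDimensional ℝ E]
    {G g : Ω → E} (hG : StronglyMeasurable[m] G) (hG2 : MemLp G 2 μ) (hg2 : MemLp g 2 μ)
    (hce : μ[g|m] =ᵐ[μ] G) :
    ∫ ω, ⟪G ω, g ω⟫ ∂μ = ∫ ω, ‖G ω‖ ^ 2 ∂μ := by
  haveI : SigmaFinite (μ.trim hm) := (isFiniteMeasure_trim hm).toSigmaFinite
  set b := stdOrthonormalBasis ℝ E with hb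
  have hgint : Integrable g μ := hg2.integrable (by norm_num)
  have hGi : ∀ i, StronglyMeasurable[m] fun ω => ⟪b i, G ω⟫ := fun i =>
    (innerSL ℝ (b i)).continuous.comp_stronglyMeasurable hG
  have hGi2 : ∀ i, MemLp (fun ω => ⟪b i, G ω⟫) 2 μ := fun i => hG2.const_inner _
  have hgi2 : ∀ i, MemLp (fun ω => ⟪b i, g ω⟫) 2 μ := fun i => hg2.const_inner _
  have hmul : ∀ i, Integrable (fun ω => ⟪b i, G ω⟫ * ⟪b i, g ω⟫) μ := fun i =>
    memL2_integrable_mul (hGi2 i) (hgi2 i)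
  have hsq : ∀ i, Integrable (fun ω => ⟪b i, G ω⟫ * ⟪b i, G ω⟫) μ := fun i =>
    memL2_integrable_mul (hGi2 i) (hGi2 i)
  have key : ∀ i, ∫ ω, ⟪b i, G ω⟫ * ⟪b i, g ω⟫ ∂μ = ∫ ω, ⟪b i, G ω⟫ * ⟪b i, G ω⟫ ∂μ := by
    intro i
    have hgi_int : Integrable (fun ω => ⟪b i, g ω⟫) μ := hgint.const_inner _
    have hci : μ[fun ω => ⟪b i, g ω⟫|m] =ᵐ[μ] fun ω => ⟪b i, G ω⟫ := by
      have h1 : μ[fun ω => innerSL ℝ (b i) (g ω)|m] =ᵐ[μ]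
          fun ω => innerSL ℝ (b i) ((μ[g|m]) ω) := condexp_clm hm (innerSL ℝ (b i)) hgint
      refine h1.trans ?_
      filter_upwards [hce] with ω hω
      simp [hω]
    have e2 := condExp_mul_of_stronglyMeasurable_left (hGi i) (hmul i) hgi_int
    calc ∫ ω, ⟪b i, G ω⟫ * ⟪b i, g ω⟫ ∂μ
        = ∫ ω, (μ[(fun ω => ⟪b i, G ω⟫) * (fun ω => ⟪b i, g ω⟫)|m]) ω ∂μ := by
          rw [integral_condExp hm]; rfl
      _ = ∫ ω, ⟪b i, G ω⟫ * ⟪b i, G ω⟫ ∂μ := by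
          refine integral_congr_ae (e2.trans ?_)
          filter_upwards [hci] with ω hω
          simp only [Pi.mul_apply, hω]
  have expand : ∀ (x y : E), ⟪x, y⟫ = ∑ i, ⟪b i, x⟫ * ⟪b i, y⟫ := by
    intro x y
    rw [← b.repr.inner_map_map x y, PiLp.inner_apply]
    simp [b.repr_apply_apply, RCLike.inner_apply, conj_trivial]
    exact Finset.sum_congr rfl fun i _ => mul_comm _ _
  calc ∫ ω, ⟪G ω, g ω⟫ ∂μ = ∫ ω, ∑ i, ⟪b i, G ω⟫ * ⟪b i, g ω⟫ ∂μ := by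
        simp_rw [← expand]
    _ = ∑ i, ∫ ω, ⟪b i, G ω⟫ * ⟪b i, g ω⟫ ∂μ := integral_finset_sum _ fun i _ => hmul i
    _ = ∑ i, ∫ ω, ⟪b i, G ω⟫ * ⟪b i, G ω⟫ ∂μ := by simp_rw [key]
    _ = ∫ ω, ∑ i, ⟪b i, G ω⟫ * ⟪b i, G ω⟫ ∂μ := (integral_finset_sum _ fun i _ => hsq i).symm
    _ = ∫ ω, ‖G ω‖ ^ 2 ∂μ := by
        refine integral_congr_ae (Filter.Eventually.of_forall fun ω => ?_)
        dsimp only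
        rw [← expand, real_inner_self_eq_norm_sq]


lemma adjoint_apply_le {n m : ℕ} (A : EuclideanSpace ℝ (Fin n) →L[ℝ] EuclideanSpace ℝ (Fin m))
    (x : EuclideanSpace ℝ (Fin m)) :
    ‖(ContinuousLinearMap.adjoint A) x‖ ≤ ‖A‖ * ‖x‖ := by
  calc ‖(ContinuousLinearMap.adjoint A) x‖ ≤ ‖ContinuousLinearMap.adjoint A‖ * ‖x‖ :=
        (ContinuousLinearMap.adjoint A).le_opNorm x
    _ = ‖A‖ * ‖x‖ := by rw [LinearIsometryEquiv.norm_map ContinuousLinearMap.adjoint A]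


/-- **Corollary 6.4, nonconvex part: possibly biased intermittent perturbations.**
Under Assumptions (A1)–(A3), if the perturbations are uniformly bounded by `D` (no zero-mean
assumption) and vanish identically outside sets `Sδ`, `Sε` of index pairs `(t, i)` with
`#Sδ ≤ A T^{1/2}` and `#Sε ≤ A T^{1/2}`, then for `γ = min (1/(3 L_{∇ℓ})) (c T^{-1/2})` the
perturbed SGD iterates satisfy `(1/T) ∑_t E‖∇ℓ(w^{(t)})‖² ≤ C T^{-1/2}`, where `c, C > 0`
depend only on the displayed problem parameters. -/
theorem intermittent_biased_nonconvex
    (N : ℕ) (hN : 2 ≤ N)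
    (Lgrad σ Δ₀ Cf C2f Lf L1f L2f D A : ℝ)
    (hLgrad : 0 < Lgrad) (hσ : 0 ≤ σ) (hΔ₀ : 0 ≤ Δ₀)
    (hCf : 0 ≤ Cf) (hC2f : 0 ≤ C2f) (hLf : 0 ≤ Lf) (hL1f : 0 ≤ L1f) (hL2f : 0 ≤ L2f)
    (hD : 0 ≤ D) (hA : 0 < A) :
    ∃ c C : ℝ, 0 < c ∧ 0 < C ∧
      ∀ (d dw : ℕ → ℕ) (hdN : d N = 1)
        (f : (i : ℕ) → EuclideanSpace ℝ (Fin (d (i - 1))) → EuclideanSpace ℝ (Fin (dw i)) →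
          EuclideanSpace ℝ (Fin (d i)))
        -- Assumption (A3)
        (hC2 : ∀ i, 1 ≤ i → i ≤ N →
          ContDiff ℝ 2
            (fun p : EuclideanSpace ℝ (Fin (d (i - 1))) × EuclideanSpace ℝ (Fin (dw i)) =>
              f i p.1 p.2))
        (hJ1 : ∀ i, 1 ≤ i → i ≤ N →
          ∀ (yv : EuclideanSpace ℝ (Fin (d (i - 1)))) (wi : EuclideanSpace ℝ (Fin (dw i))),
            ‖fderiv ℝ (fun z => f i z wi) yv‖ ≤ Cf)
        (hJ2 : ∀ i, 1 ≤ i → i ≤ N →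
          ∀ (yv : EuclideanSpace ℝ (Fin (d (i - 1)))) (wi : EuclideanSpace ℝ (Fin (dw i))),
            ‖fderiv ℝ (fun z => f i yv z) wi‖ ≤ Cf)
        (hT21 : ∀ i, 1 ≤ i → i ≤ N →
          ∀ (yv dir : EuclideanSpace ℝ (Fin (d (i - 1)))) (wi : EuclideanSpace ℝ (Fin (dw i))),
            frobNorm ((fderiv ℝ (fun z => fderiv ℝ (fun w' => f i z w') wi) yv) dir) ≤
              C2f * ‖dir‖)
        (hLipf : ∀ i, 1 ≤ i → i ≤ N →
          ∀ (y₁ y₂ : EuclideanSpace ℝ (Fin (d (i - 1)))) (wi : EuclideanSpace ℝ (Fin (dw i))),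
            ‖f i y₁ wi - f i y₂ wi‖ ≤ Lf * ‖y₁ - y₂‖)
        (hLipJ1 : ∀ i, 1 ≤ i → i ≤ N →
          ∀ (y₁ y₂ : EuclideanSpace ℝ (Fin (d (i - 1)))) (wi : EuclideanSpace ℝ (Fin (dw i))),
            frobNorm (fderiv ℝ (fun z => f i z wi) y₁ - fderiv ℝ (fun z => f i z wi) y₂) ≤
              L1f * ‖y₁ - y₂‖)
        (hLipJ2 : ∀ i, 1 ≤ i → i ≤ N →
          ∀ (y₁ y₂ : EuclideanSpace ℝ (Fin (d (i - 1)))) (wi : EuclideanSpace ℝ (Fin (dw i))),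
            frobNorm (fderiv ℝ (fun z => f i y₁ z) wi - fderiv ℝ (fun z => f i y₂ z) wi) ≤
              L1f * ‖y₁ - y₂‖)
        (hLipT : ∀ i, 1 ≤ i → i ≤ N →
          ∀ (y₁ y₂ : EuclideanSpace ℝ (Fin (d (i - 1)))) (wi : EuclideanSpace ℝ (Fin (dw i))),
            frobNorm3 (fderiv ℝ (fun z => fderiv ℝ (fun w' => f i z w') wi) y₁ -
                fderiv ℝ (fun z => fderiv ℝ (fun w' => f i z w') wi) y₂) ≤
              L2f * ‖y₁ - y₂‖)
        -- the objective `ℓ`, its infimum and the regularizer `R`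
        (ℓ R : ParamSpace N dw → ℝ) (lstar : ℝ)
        (hdiffℓ : Differentiable ℝ ℓ) (hdiffR : Differentiable ℝ R)
        -- Assumption (A1)
        (hLipGrad : ∀ p q : ParamSpace N dw,
          ‖gradient ℓ p - gradient ℓ q‖ ≤ Lgrad * ‖p - q‖)
        (hstar : ∀ p, lstar ≤ ℓ p) (hattain : ∃ p, ℓ p = lstar)
        -- probability space and filtrations
        {Ω : Type} [mΩ : MeasurableSpace Ω] (μ : Measure Ω) (hprob : IsProbabilityMeasure μ)
        (mF : ℕ → MeasurableSpace Ω)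
        (hmF : ∀ t, mF t ≤ mΩ) (hmFmono : ∀ t, mF t ≤ mF (t + 1))
        -- iterates, passes and perturbations
        (wseq : ℕ → Ω → ParamSpace N dw)
        (y ytil v vtil : ℕ → (i : ℕ) → Ω → EuclideanSpace ℝ (Fin (d i)))
        (δ : ℕ → (i : ℕ) → Ω → EuclideanSpace ℝ (Fin (d i)))
        (ε : ℕ → (i : ℕ) → Ω → EuclideanSpace ℝ (Fin (d (i - 1))))
        (uS utS : ℕ → Ω → ParamSpace N dw)
        -- the horizon and the prescribed step size
        (T : ℕ) (hT : 1 ≤ T)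
        (γ : ℝ) (hγdef : γ = min (1 / (3 * Lgrad)) (c * (T : ℝ) ^ (-(1 : ℝ) / 2)))
        (w0 : ParamSpace N dw) (hw0 : ∀ ω, wseq 0 ω = w0)
        (hΔ : ℓ w0 - lstar = Δ₀)
        (hy0 : ∀ t ω, ytil t 0 ω = y t 0 ω)
        (hfwd : ∀ t ω, ∀ i, (hi : i < N) →
          y t (i + 1) ω = f (i + 1) (y t i ω) (wseq t ω ⟨i, hi⟩))
        (hfwdp : ∀ t ω, ∀ i, (hi : i < N) →
          ytil t (i + 1) ω = f (i + 1) (ytil t i ω) (wseq t ω ⟨i, hi⟩) + δ t (i + 1) ω)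
        (hvN : ∀ t ω j, v t N ω j = 1) (hvtilN : ∀ t ω j, vtil t N ω j = 1)
        (hbwd : ∀ t ω, ∀ i, 1 ≤ i → (hi : i < N) →
          v t i ω =
            ContinuousLinearMap.adjoint
              (fderiv ℝ (fun z => f (i + 1) z (wseq t ω ⟨i, hi⟩)) (y t i ω))
              (v t (i + 1) ω))
        (hbwdp : ∀ t ω, ∀ i, 1 ≤ i → (hi : i < N) →
          vtil t i ω =
            ContinuousLinearMap.adjoint
              (fderiv ℝ (fun z => f (i + 1) z (wseq t ω ⟨i, hi⟩)) (ytil t i ω))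
                (vtil t (i + 1) ω) + ε t (i + 1) ω)
        (hu : ∀ t ω, ∀ i, (hi : i < N) →
          uS t ω ⟨i, hi⟩ =
            ContinuousLinearMap.adjoint
              (fderiv ℝ (fun z => f (i + 1) (y t i ω) z) (wseq t ω ⟨i, hi⟩))
              (v t (i + 1) ω))
        (hut : ∀ t ω, ∀ i, (hi : i < N) →
          utS t ω ⟨i, hi⟩ =
            ContinuousLinearMap.adjoint
              (fderiv ℝ (fun z => f (i + 1) (ytil t i ω) z) (wseq t ω ⟨i, hi⟩))
              (vtil t (i + 1) ω))
        (hupd : ∀ t ω, wseq (t + 1) ω = wseq t ω - γ • (utS t ω + gradient R (wseq t ω)))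
        -- measurability with respect to the filtrations
        (hwmeas : ∀ t, StronglyMeasurable[mF t] (wseq t))
        -- Assumption (A2): conditional unbiasedness and bounded variance of the
        -- unperturbed stochastic gradient
        (hA2mean : ∀ t,
          μ[fun ω => uS t ω + gradient R (wseq t ω) | mF t] =ᵐ[μ]
            fun ω => gradient ℓ (wseq t ω))
        (hA2var : ∀ t, ∀ᵐ ω ∂μ,
          (μ[fun ω' => ‖uS t ω' + gradient R (wseq t ω') - gradient ℓ (wseq t ω')‖ ^ 2
              | mF t]) ω ≤ σ ^ 2)
        -- integrability (finite fourth moments)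
        (hδ2 : ∀ t i, MemLp (δ t i) 2 μ) (hδ4 : ∀ t i, Integrable (fun ω => ‖δ t i ω‖ ^ 4) μ)
        (hε2 : ∀ t i, MemLp (ε t i) 2 μ)
        (huS2 : ∀ t, MemLp (uS t) 2 μ) (hutS2 : ∀ t, MemLp (utS t) 2 μ)
        (hR2 : ∀ t, MemLp (fun ω => gradient R (wseq t ω)) 2 μ)
        (hℓint : ∀ t, Integrable (fun ω => ℓ (wseq t ω)) μ)
        (hgint : ∀ t, Integrable (fun ω => ‖gradient ℓ (wseq t ω)‖ ^ 2) μ)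
        -- uniformly bounded, intermittent (possibly biased) perturbations
        (hδbd : ∀ t i, ∀ᵐ ω ∂μ, ‖δ t i ω‖ ≤ D)
        (hεbd : ∀ t i, ∀ᵐ ω ∂μ, ‖ε t i ω‖ ≤ D)
        (Sδ Sε : Finset (ℕ × ℕ))
        (hSδ : ∀ t i, t < T → 1 ≤ i → i ≤ N → (t, i) ∉ Sδ → ∀ ω, δ t i ω = 0)
        (hSε : ∀ t i, t < T → 2 ≤ i → i ≤ N → (t, i) ∉ Sε → ∀ ω, ε t i ω = 0)
        (hQδ : (Sδ.card : ℝ) ≤ A * (T : ℝ) ^ ((1 : ℝ) / 2))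
        (hQε : (Sε.card : ℝ) ≤ A * (T : ℝ) ^ ((1 : ℝ) / 2)),
        (1 / (T : ℝ)) * ∑ t ∈ Finset.range T, ∫ ω, ‖gradient ℓ (wseq t ω)‖ ^ 2 ∂μ ≤
          C * (T : ℝ) ^ (-(1 : ℝ) / 2) := by
  classical
  set Ey : ℝ := D * (Lf + 1) ^ N with hEy_def
  set Vb : ℝ := (Cf + 1) ^ N with hVb_def
  set M : ℝ := L1f * Ey * Vb + D with hM_def
  set Evb : ℝ := M * N * (Cf + 1) ^ N with hEvb_def
  set Ub : ℝ := Cf * Evb + L1f * Ey * Vb with hUb_def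
  set B2 : ℝ := N * Ub ^ 2 with hB2_def
  have hLf1 : (0:ℝ) ≤ Lf + 1 := by linarith
  have hCf1 : (0:ℝ) ≤ Cf + 1 := by linarith
  have hEy0 : 0 ≤ Ey := mul_nonneg hD (pow_nonneg hLf1 N)
  have hVb0 : 0 ≤ Vb := pow_nonneg hCf1 N
  have hM0 : 0 ≤ M := add_nonneg (mul_nonneg (mul_nonneg hL1f hEy0) hVb0) hD
  have hEvb0 : 0 ≤ Evb := mul_nonneg (mul_nonneg hM0 (Nat.cast_nonneg N)) (pow_nonneg hCf1 N)
  have hUb0 : 0 ≤ Ub :=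
    add_nonneg (mul_nonneg hCf hEvb0) (mul_nonneg (mul_nonneg hL1f hEy0) hVb0)
  have hB20 : 0 ≤ B2 := mul_nonneg (Nat.cast_nonneg N) (sq_nonneg _)
  set C : ℝ := 36 * Lgrad * Δ₀ + 12 * Δ₀ + 96 * A * B2 + 72 * Lgrad ^ 2 * σ ^ 2 +
    24 * Lgrad * σ ^ 2 + 1 with hC_def
  have hC0 : 0 < C := by
    have h1 : 0 ≤ 36 * Lgrad * Δ₀ := by positivity
    have h2 : 0 ≤ 96 * A * B2 := by positivity
    have h3 : 0 ≤ 72 * Lgrad ^ 2 * σ ^ 2 := by positivity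
    have h4 : 0 ≤ 24 * Lgrad * σ ^ 2 := by positivity
    nlinarith
  refine ⟨1, C, one_pos, hC0, ?_⟩
  intro d dw hdN f hC2 hJ1 hJ2 hT21 hLipf hLipJ1 hLipJ2 hLipT ℓ R lstar hdiffℓ hdiffR
    hLipGrad hstar hattain Ω mΩ μ hprob mF hmF hmFmono wseq y ytil v vtil δ ε uS utS T hT
    γ hγdef w0 hw0 hΔ hy0 hfwd hfwdp hvN hvtilN hbwd hbwdp hu hut hupd hwmeas hA2mean hA2var
    hδ2 hδ4 hε2 huS2 hutS2 hR2 hℓint hgint hδbd hεbd Sδ Sε hSδ hSε hQδ hQε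
  have hT1 : (1:ℝ) ≤ (T:ℝ) := by exact_mod_cast hT
  have hTpos : (0:ℝ) < T := by linarith only [hT1]
  set s : ℝ := (T:ℝ) ^ ((1:ℝ)/2) with hs_def
  set τ : ℝ := (T:ℝ) ^ (-(1:ℝ)/2) with hτ_def
  have hspos : 0 < s := Real.rpow_pos_of_pos hTpos _
  have hτpos : 0 < τ := Real.rpow_pos_of_pos hTpos _
  have hτs : τ * s = 1 := by
    rw [hτ_def, hs_def, ← Real.rpow_add hTpos]
    norm_num
  have hss : s * s = (T:ℝ) := by
    rw [hs_def, ← Real.rpow_add hTpos]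
    norm_num
  have hs1 : 1 ≤ s := by
    calc (1:ℝ) = 1 ^ ((1:ℝ)/2) := (Real.one_rpow _).symm
      _ ≤ s := by
          rw [hs_def]
          exact Real.rpow_le_rpow zero_le_one hT1 (by norm_num)
  have hγpos : 0 < γ := by
    rw [hγdef]
    exact lt_min (by positivity) (by positivity)
  have hγL : γ * (3 * Lgrad) ≤ 1 := by
    rw [hγdef]
    calc min (1 / (3 * Lgrad)) (1 * τ) * (3 * Lgrad)
        ≤ (1 / (3 * Lgrad)) * (3 * Lgrad) :=
          mul_le_mul_of_nonneg_right (min_le_left _ _) (by positivity)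
      _ = 1 := by field_simp
  have hγτ : γ ≤ τ := by
    rw [hγdef]
    simpa using min_le_right (1 / (3 * Lgrad)) (1 * τ)
  have h1γ : 1 ≤ γ * (3 * Lgrad + s) := by
    rcases min_choice (1 / (3 * Lgrad)) (1 * τ) with h | h <;> rw [hγdef, h]
    · rw [one_div, inv_mul_eq_div, le_div_iff₀ (by positivity)]
      linarith
    · have h2 : 1 * τ * (3 * Lgrad + s) = 3 * Lgrad * τ + τ * s := by ring
      rw [h2, hτs]
      have h3 : 0 ≤ 3 * Lgrad * τ :=
        mul_nonneg (by linarith only [hLgrad] : (0:ℝ) ≤ 3 * Lgrad) hτpos.le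
      linarith only [h3]
  -- continuity of the gradient
  have hgradcont : Continuous (gradient ℓ) := by
    have hl : LipschitzWith (Real.toNNReal Lgrad) (gradient ℓ) := by
      apply LipschitzWith.of_dist_le_mul
      intro p q
      rw [dist_eq_norm, dist_eq_norm, Real.coe_toNNReal _ hLgrad.le]
      exact hLipGrad p q
    exact hl.continuous
  have hGsm : ∀ t, StronglyMeasurable[mF t] (fun ω => gradient ℓ (wseq t ω)) :=
    fun t => hgradcont.comp_stronglyMeasurable (hwmeas t)
  have hG2 : ∀ t, MemLp (fun ω => gradient ℓ (wseq t ω)) 2 μ := fun t =>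
    (memLp_two_iff_integrable_sq_norm
      (((hGsm t).mono (hmF t)).aestronglyMeasurable)).2 (hgint t)
  have hgh2 : ∀ t, MemLp (fun ω => uS t ω + gradient R (wseq t ω)) 2 μ := fun t =>
    (huS2 t).add (hR2 t)
  have he2 : ∀ t, MemLp (fun ω => utS t ω - uS t ω) 2 μ := fun t => (hutS2 t).sub (huS2 t)
  have hIe_int : ∀ t, Integrable (fun ω => ‖utS t ω - uS t ω‖ ^ 2) μ := fun t =>
    (memLp_two_iff_integrable_sq_norm (he2 t).aestronglyMeasurable).1 (he2 t)
  have hIgh_int : ∀ t, Integrable (fun ω => ‖uS t ω + gradient R (wseq t ω)‖ ^ 2) μ := fun t =>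
    (memLp_two_iff_integrable_sq_norm (hgh2 t).aestronglyMeasurable).1 (hgh2 t)
  have hinner_int : ∀ t, Integrable
      (fun ω => ⟪gradient ℓ (wseq t ω), uS t ω + gradient R (wseq t ω)⟫) μ := fun t =>
    memL2_integrable_inner (hG2 t) (hgh2 t)
  have hIGnn : ∀ t, 0 ≤ ∫ ω, ‖gradient ℓ (wseq t ω)‖ ^ 2 ∂μ := fun t =>
    integral_nonneg fun ω => sq_nonneg _
  have hIenn : ∀ t, 0 ≤ ∫ ω, ‖utS t ω - uS t ω‖ ^ 2 ∂μ := fun t =>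
    integral_nonneg fun ω => sq_nonneg _
  have hIA : ∀ t, ∫ ω, ⟪gradient ℓ (wseq t ω), uS t ω + gradient R (wseq t ω)⟫ ∂μ
      = ∫ ω, ‖gradient ℓ (wseq t ω)‖ ^ 2 ∂μ := fun t =>
    integral_inner_eq_sq_of_condexp (hmF t) (hGsm t) (hG2 t) (hgh2 t) (hA2mean t)
  have hIB : ∀ t, ∫ ω, ‖uS t ω + gradient R (wseq t ω)‖ ^ 2 ∂μ
      ≤ (∫ ω, ‖gradient ℓ (wseq t ω)‖ ^ 2 ∂μ) + σ ^ 2 := by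
    intro t
    have hdiff2 : MemLp (fun ω => uS t ω + gradient R (wseq t ω) - gradient ℓ (wseq t ω)) 2 μ :=
      (hgh2 t).sub (hG2 t)
    have hdint : Integrable
        (fun ω => ‖uS t ω + gradient R (wseq t ω) - gradient ℓ (wseq t ω)‖ ^ 2) μ :=
      (memLp_two_iff_integrable_sq_norm hdiff2.aestronglyMeasurable).1 hdiff2
    have hvar : ∫ ω, ‖uS t ω + gradient R (wseq t ω) - gradient ℓ (wseq t ω)‖ ^ 2 ∂μ
        ≤ σ ^ 2 := by
      haveI : SigmaFinite (μ.trim (hmF t)) := (isFiniteMeasure_trim (hmF t)).toSigmaFinite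
      have h1 : ∫ ω, ‖uS t ω + gradient R (wseq t ω) - gradient ℓ (wseq t ω)‖ ^ 2 ∂μ
          = ∫ ω, (μ[fun ω' => ‖uS t ω' + gradient R (wseq t ω') - gradient ℓ (wseq t ω')‖ ^ 2
            | mF t]) ω ∂μ := (integral_condExp (hmF t)).symm
      rw [h1]
      calc ∫ ω, (μ[fun ω' => ‖uS t ω' + gradient R (wseq t ω') -
              gradient ℓ (wseq t ω')‖ ^ 2 | mF t]) ω ∂μ
          ≤ ∫ (_ : Ω), σ ^ 2 ∂μ :=
            integral_mono_ae integrable_condExp (integrable_const _) (hA2var t)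
        _ = σ ^ 2 := by simp [measure_univ]
    have hpt : ∀ ω, ‖uS t ω + gradient R (wseq t ω)‖ ^ 2
        = ‖uS t ω + gradient R (wseq t ω) - gradient ℓ (wseq t ω)‖ ^ 2
          + 2 * ⟪gradient ℓ (wseq t ω), uS t ω + gradient R (wseq t ω)⟫
          - ‖gradient ℓ (wseq t ω)‖ ^ 2 := by
      intro ω
      have h1 := norm_sub_sq_real (uS t ω + gradient R (wseq t ω)) (gradient ℓ (wseq t ω))
      have h2 := real_inner_comm (uS t ω + gradient R (wseq t ω)) (gradient ℓ (wseq t ω))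
      linarith only [h1, h2]
    have hsplit : ∫ ω, ‖uS t ω + gradient R (wseq t ω)‖ ^ 2 ∂μ
        = (∫ ω, ‖uS t ω + gradient R (wseq t ω) - gradient ℓ (wseq t ω)‖ ^ 2 ∂μ)
          + 2 * (∫ ω, ⟪gradient ℓ (wseq t ω), uS t ω + gradient R (wseq t ω)⟫ ∂μ)
          - ∫ ω, ‖gradient ℓ (wseq t ω)‖ ^ 2 ∂μ := by
      have i1 : Integrable (fun ω =>
          ‖uS t ω + gradient R (wseq t ω) - gradient ℓ (wseq t ω)‖ ^ 2
            + 2 * ⟪gradient ℓ (wseq t ω), uS t ω + gradient R (wseq t ω)⟫) μ :=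
        hdint.add ((hinner_int t).const_mul 2)
      have i2 : Integrable (fun ω =>
          2 * ⟪gradient ℓ (wseq t ω), uS t ω + gradient R (wseq t ω)⟫) μ :=
        (hinner_int t).const_mul 2
      rw [integral_congr_ae (Filter.Eventually.of_forall hpt), integral_sub i1 (hgint t),
        integral_add hdint i2, integral_const_mul _ _]
    rw [hsplit, hIA t]
    linarith only [hvar]
  -- the per-step descent inequality
  have hstep : ∀ t,
      γ / 12 * (∫ ω, ‖gradient ℓ (wseq t ω)‖ ^ 2 ∂μ)
        ≤ (∫ ω, ℓ (wseq t ω) ∂μ) - (∫ ω, ℓ (wseq (t + 1) ω) ∂μ)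
          + 2 * γ * (∫ ω, ‖utS t ω - uS t ω‖ ^ 2 ∂μ) + 2 * Lgrad * γ ^ 2 * σ ^ 2 := by
    intro t
    have hpd : ∀ ω, ℓ (wseq (t + 1) ω) ≤ ℓ (wseq t ω)
        + (-γ) * ⟪gradient ℓ (wseq t ω), uS t ω + gradient R (wseq t ω)⟫
        + (γ / 4) * ‖gradient ℓ (wseq t ω)‖ ^ 2
        + γ * ‖utS t ω - uS t ω‖ ^ 2
        + (2 * Lgrad * γ ^ 2) * ‖uS t ω + gradient R (wseq t ω)‖ ^ 2
        + (2 * Lgrad * γ ^ 2) * ‖utS t ω - uS t ω‖ ^ 2 := by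
      intro ω
      have hD1 := descent_lemma hdiffℓ hLgrad.le hLipGrad (wseq t ω) (wseq (t + 1) ω)
      have hwd : wseq (t + 1) ω - wseq t ω
          = -(γ • (uS t ω + gradient R (wseq t ω) + (utS t ω - uS t ω))) := by
        have harg : utS t ω + gradient R (wseq t ω)
            = uS t ω + gradient R (wseq t ω) + (utS t ω - uS t ω) := by abel
        rw [hupd t ω, ← harg]
        abel
      have hinner1 : ⟪gradient ℓ (wseq t ω), wseq (t + 1) ω - wseq t ω⟫
          = (-γ) * (⟪gradient ℓ (wseq t ω), uS t ω + gradient R (wseq t ω)⟫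
            + ⟪gradient ℓ (wseq t ω), utS t ω - uS t ω⟫) := by
        rw [hwd, inner_neg_right, real_inner_smul_right, inner_add_right]
        ring
      have hnorm1 : ‖wseq (t + 1) ω - wseq t ω‖ ^ 2
          = γ ^ 2 * ‖uS t ω + gradient R (wseq t ω) + (utS t ω - uS t ω)‖ ^ 2 := by
        rw [hwd, norm_neg, norm_smul, Real.norm_eq_abs, abs_of_nonneg hγpos.le, mul_pow]
      rw [hinner1, hnorm1] at hD1
      have h4 : ‖uS t ω + gradient R (wseq t ω) + (utS t ω - uS t ω)‖ ^ 2
          ≤ 2 * ‖uS t ω + gradient R (wseq t ω)‖ ^ 2 + 2 * ‖utS t ω - uS t ω‖ ^ 2 := by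
        have hna := norm_add_le (uS t ω + gradient R (wseq t ω)) (utS t ω - uS t ω)
        nlinarith only [hna, sq_nonneg (‖uS t ω + gradient R (wseq t ω)‖ - ‖utS t ω - uS t ω‖),
          norm_nonneg (uS t ω + gradient R (wseq t ω) + (utS t ω - uS t ω)),
          norm_nonneg (uS t ω + gradient R (wseq t ω)), norm_nonneg (utS t ω - uS t ω)]
      have h5 : -(γ * ⟪gradient ℓ (wseq t ω), utS t ω - uS t ω⟫)
          ≤ γ * ((1/4) * ‖gradient ℓ (wseq t ω)‖ ^ 2 + ‖utS t ω - uS t ω‖ ^ 2) := by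
        have h51 : -⟪gradient ℓ (wseq t ω), utS t ω - uS t ω⟫
            ≤ ‖gradient ℓ (wseq t ω)‖ * ‖utS t ω - uS t ω‖ := by
          have ha := abs_real_inner_le_norm (gradient ℓ (wseq t ω)) (utS t ω - uS t ω)
          have hb := neg_abs_le ⟪gradient ℓ (wseq t ω), utS t ω - uS t ω⟫
          linarith only [ha, hb]
        have h52 : ‖gradient ℓ (wseq t ω)‖ * ‖utS t ω - uS t ω‖
            ≤ (1/4) * ‖gradient ℓ (wseq t ω)‖ ^ 2 + ‖utS t ω - uS t ω‖ ^ 2 := by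
          nlinarith only [sq_nonneg (‖gradient ℓ (wseq t ω)‖ - 2 * ‖utS t ω - uS t ω‖)]
        calc -(γ * ⟪gradient ℓ (wseq t ω), utS t ω - uS t ω⟫)
            = γ * (-⟪gradient ℓ (wseq t ω), utS t ω - uS t ω⟫) := by ring
          _ ≤ γ * ((1/4) * ‖gradient ℓ (wseq t ω)‖ ^ 2 + ‖utS t ω - uS t ω‖ ^ 2) :=
              mul_le_mul_of_nonneg_left (h51.trans h52) hγpos.le
      have h7 : Lgrad * (γ ^ 2 * ‖uS t ω + gradient R (wseq t ω) + (utS t ω - uS t ω)‖ ^ 2)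
          ≤ 2 * Lgrad * γ ^ 2 * ‖uS t ω + gradient R (wseq t ω)‖ ^ 2
            + 2 * Lgrad * γ ^ 2 * ‖utS t ω - uS t ω‖ ^ 2 := by
        nlinarith only [h4, mul_nonneg hLgrad.le (sq_nonneg γ)]
      linarith only [hD1, h5, h7]
    have hintRHS : Integrable (fun ω => ℓ (wseq t ω)
        + (-γ) * ⟪gradient ℓ (wseq t ω), uS t ω + gradient R (wseq t ω)⟫
        + (γ / 4) * ‖gradient ℓ (wseq t ω)‖ ^ 2
        + γ * ‖utS t ω - uS t ω‖ ^ 2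
        + (2 * Lgrad * γ ^ 2) * ‖uS t ω + gradient R (wseq t ω)‖ ^ 2
        + (2 * Lgrad * γ ^ 2) * ‖utS t ω - uS t ω‖ ^ 2) μ :=
      (((((hℓint t).add ((hinner_int t).const_mul (-γ))).add
        ((hgint t).const_mul (γ / 4))).add ((hIe_int t).const_mul γ)).add
        ((hIgh_int t).const_mul (2 * Lgrad * γ ^ 2))).add
        ((hIe_int t).const_mul (2 * Lgrad * γ ^ 2))
    have hmono := integral_mono (hℓint (t + 1)) hintRHS hpd
    have hsplit2 : ∫ ω, (ℓ (wseq t ω)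
        + (-γ) * ⟪gradient ℓ (wseq t ω), uS t ω + gradient R (wseq t ω)⟫
        + (γ / 4) * ‖gradient ℓ (wseq t ω)‖ ^ 2
        + γ * ‖utS t ω - uS t ω‖ ^ 2
        + (2 * Lgrad * γ ^ 2) * ‖uS t ω + gradient R (wseq t ω)‖ ^ 2
        + (2 * Lgrad * γ ^ 2) * ‖utS t ω - uS t ω‖ ^ 2) ∂μ
        = (∫ ω, ℓ (wseq t ω) ∂μ)
          + (-γ) * (∫ ω, ⟪gradient ℓ (wseq t ω), uS t ω + gradient R (wseq t ω)⟫ ∂μ)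
          + (γ / 4) * (∫ ω, ‖gradient ℓ (wseq t ω)‖ ^ 2 ∂μ)
          + γ * (∫ ω, ‖utS t ω - uS t ω‖ ^ 2 ∂μ)
          + (2 * Lgrad * γ ^ 2) * (∫ ω, ‖uS t ω + gradient R (wseq t ω)‖ ^ 2 ∂μ)
          + (2 * Lgrad * γ ^ 2) * (∫ ω, ‖utS t ω - uS t ω‖ ^ 2 ∂μ) := by
      have j1 : Integrable (fun ω =>
          (-γ) * ⟪gradient ℓ (wseq t ω), uS t ω + gradient R (wseq t ω)⟫) μ :=
        (hinner_int t).const_mul (-γ)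
      have j2 : Integrable (fun ω => (γ / 4) * ‖gradient ℓ (wseq t ω)‖ ^ 2) μ :=
        (hgint t).const_mul (γ / 4)
      have j3 : Integrable (fun ω => γ * ‖utS t ω - uS t ω‖ ^ 2) μ :=
        (hIe_int t).const_mul γ
      have j4 : Integrable (fun ω =>
          (2 * Lgrad * γ ^ 2) * ‖uS t ω + gradient R (wseq t ω)‖ ^ 2) μ :=
        (hIgh_int t).const_mul (2 * Lgrad * γ ^ 2)
      have j5 : Integrable (fun ω => (2 * Lgrad * γ ^ 2) * ‖utS t ω - uS t ω‖ ^ 2) μ :=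
        (hIe_int t).const_mul (2 * Lgrad * γ ^ 2)
      have k1 : Integrable (fun ω => ℓ (wseq t ω)
          + (-γ) * ⟪gradient ℓ (wseq t ω), uS t ω + gradient R (wseq t ω)⟫) μ :=
        (hℓint t).add j1
      have k2 : Integrable (fun ω => ℓ (wseq t ω)
          + (-γ) * ⟪gradient ℓ (wseq t ω), uS t ω + gradient R (wseq t ω)⟫
          + (γ / 4) * ‖gradient ℓ (wseq t ω)‖ ^ 2) μ := k1.add j2
      have k3 : Integrable (fun ω => ℓ (wseq t ω)
          + (-γ) * ⟪gradient ℓ (wseq t ω), uS t ω + gradient R (wseq t ω)⟫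
          + (γ / 4) * ‖gradient ℓ (wseq t ω)‖ ^ 2
          + γ * ‖utS t ω - uS t ω‖ ^ 2) μ := k2.add j3
      have k4 : Integrable (fun ω => ℓ (wseq t ω)
          + (-γ) * ⟪gradient ℓ (wseq t ω), uS t ω + gradient R (wseq t ω)⟫
          + (γ / 4) * ‖gradient ℓ (wseq t ω)‖ ^ 2
          + γ * ‖utS t ω - uS t ω‖ ^ 2
          + (2 * Lgrad * γ ^ 2) * ‖uS t ω + gradient R (wseq t ω)‖ ^ 2) μ := k3.add j4
      rw [integral_add k4 j5, integral_add k3 j4, integral_add k2 j3, integral_add k1 j2,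
        integral_add (hℓint t) j1, integral_const_mul _ _, integral_const_mul _ _, integral_const_mul _ _,
        integral_const_mul _ _, integral_const_mul _ _]
    rw [hsplit2, hIA t] at hmono
    have hIBt := hIB t
    have hint1 : 0 ≤ γ * (∫ ω, ‖gradient ℓ (wseq t ω)‖ ^ 2 ∂μ) * (1 - γ * (3 * Lgrad)) :=
      mul_nonneg (mul_nonneg hγpos.le (hIGnn t)) (by linarith only [hγL])
    have hint2 : 0 ≤ γ * (∫ ω, ‖utS t ω - uS t ω‖ ^ 2 ∂μ) * (1 - γ * (3 * Lgrad)) :=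
      mul_nonneg (mul_nonneg hγpos.le (hIenn t)) (by linarith only [hγL])
    have hint3 : 0 ≤ 2 * Lgrad * γ ^ 2 := by positivity
    have hIBt' : (2 * Lgrad * γ ^ 2) * (∫ ω, ‖uS t ω + gradient R (wseq t ω)‖ ^ 2 ∂μ)
        ≤ (2 * Lgrad * γ ^ 2) * ((∫ ω, ‖gradient ℓ (wseq t ω)‖ ^ 2 ∂μ) + σ ^ 2) :=
      mul_le_mul_of_nonneg_left hIBt hint3
    have hint4 : 0 ≤ γ * (∫ ω, ‖gradient ℓ (wseq t ω)‖ ^ 2 ∂μ) :=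
      mul_nonneg hγpos.le (hIGnn t)
    have hint5 : 0 ≤ γ * (∫ ω, ‖utS t ω - uS t ω‖ ^ 2 ∂μ) :=
      mul_nonneg hγpos.le (hIenn t)
    nlinarith only [hmono, hIBt', hint1, hint2, hint4, hint5]
  -- almost sure bounds on all perturbations simultaneously
  have haebd : ∀ᵐ ω ∂μ, ∀ t i, ‖δ t i ω‖ ≤ D ∧ ‖ε t i ω‖ ≤ D := by
    rw [MeasureTheory.ae_all_iff]
    intro t
    rw [MeasureTheory.ae_all_iff]
    intro i
    filter_upwards [hδbd t i, hεbd t i] with ω h1 h2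
    exact ⟨h1, h2⟩
  -- deterministic propagation of perturbations through the network
  have hdet : ∀ t ω, (∀ i, ‖δ t i ω‖ ≤ D) → (∀ i, ‖ε t i ω‖ ≤ D) →
      ‖utS t ω - uS t ω‖ ^ 2 ≤ B2 := by
    intro t ω hδω hεω
    have cl1 : ∀ i, i ≤ N → ‖ytil t i ω - y t i ω‖ ≤ D * (Lf + 1) ^ i := by
      intro i
      induction i with
      | zero =>
        intro _
        rw [hy0 t ω, sub_self, norm_zero, pow_zero, mul_one]
        exact hD
      | succ i ih =>
        intro hiN
        have hi : i < N := by omega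
        have hrec : ytil t (i + 1) ω - y t (i + 1) ω
            = (f (i + 1) (ytil t i ω) (wseq t ω ⟨i, hi⟩)
                - f (i + 1) (y t i ω) (wseq t ω ⟨i, hi⟩)) + δ t (i + 1) ω := by
          rw [hfwdp t ω i hi, hfwd t ω i hi]
          abel
        have hq1 : (1:ℝ) ≤ (Lf + 1) ^ i := one_le_pow₀ (by linarith only [hLf])
        have hps : (Lf + 1) ^ (i + 1) = (Lf + 1) ^ i * (Lf + 1) := pow_succ _ _
        have hihyp := ih (by omega)
        have hmul := mul_le_mul_of_nonneg_left hihyp hLf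
        calc ‖ytil t (i + 1) ω - y t (i + 1) ω‖
            ≤ ‖f (i + 1) (ytil t i ω) (wseq t ω ⟨i, hi⟩)
                - f (i + 1) (y t i ω) (wseq t ω ⟨i, hi⟩)‖ + ‖δ t (i + 1) ω‖ := by
              rw [hrec]; exact norm_add_le _ _
          _ ≤ Lf * ‖ytil t i ω - y t i ω‖ + D :=
              add_le_add (hLipf (i + 1) (by omega) (by omega) _ _ _) (hδω (i + 1))
          _ ≤ Lf * (D * (Lf + 1) ^ i) + D := by linarith only [hmul]
          _ ≤ D * (Lf + 1) ^ (i + 1) := by nlinarith only [hq1, hD, hLf, hps]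
    have cl1' : ∀ i, i ≤ N → ‖ytil t i ω - y t i ω‖ ≤ Ey := by
      intro i h
      refine (cl1 i h).trans ?_
      rw [hEy_def]
      have : (Lf + 1) ^ i ≤ (Lf + 1) ^ N :=
        pow_le_pow_right₀ (by linarith only [hLf]) h
      nlinarith only [this, hD]
    have cl2 : ∀ k i, i + k = N → 1 ≤ i → ‖v t i ω‖ ≤ (Cf + 1) ^ k := by
      intro k
      induction k with
      | zero =>
        intro i hik _
        obtain rfl : i = N := by omega
        have hvn : ‖v t i ω‖ = 1 := by
          rw [EuclideanSpace.norm_eq]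
          simp [hvN t ω, hdN]
        rw [hvn, pow_zero]
      | succ k ih =>
        intro i hik h1i
        have hi : i < N := by omega
        rw [hbwd t ω i h1i hi]
        refine le_trans (adjoint_apply_le _ _) ?_
        have h2 := mul_le_mul (hJ1 (i + 1) (by omega) (by omega) (y t i ω) (wseq t ω ⟨i, hi⟩))
          (ih (i + 1) (by omega) (by omega)) (norm_nonneg _) hCf
        refine h2.trans ?_
        have hq : (0:ℝ) ≤ (Cf + 1) ^ k := pow_nonneg hCf1 k
        have hps : (Cf + 1) ^ (k + 1) = (Cf + 1) ^ k * (Cf + 1) := pow_succ _ _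
        nlinarith only [hq, hCf, hps]
    have cl2' : ∀ i, 1 ≤ i → i ≤ N → ‖v t i ω‖ ≤ Vb := by
      intro i h1 h2
      refine (cl2 (N - i) i (by omega) h1).trans ?_
      rw [hVb_def]
      exact pow_le_pow_right₀ (by linarith only [hCf]) (by omega)
    have cl3 : ∀ k i, i + k = N → 1 ≤ i →
        ‖vtil t i ω - v t i ω‖ ≤ M * k * (Cf + 1) ^ k := by
      intro k
      induction k with
      | zero =>
        intro i hik _
        obtain rfl : i = N := by omega
        have hvv : vtil t i ω = v t i ω := by
          ext j
          rw [hvtilN t ω j, hvN t ω j]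
        rw [hvv, sub_self, norm_zero]
        simp
      | succ k ih =>
        intro i hik h1i
        have hi : i < N := by omega
        have hrec : vtil t i ω - v t i ω
            = (ContinuousLinearMap.adjoint
                (fderiv ℝ (fun z => f (i + 1) z (wseq t ω ⟨i, hi⟩)) (ytil t i ω)))
                (vtil t (i + 1) ω - v t (i + 1) ω)
              + (ContinuousLinearMap.adjoint
                (fderiv ℝ (fun z => f (i + 1) z (wseq t ω ⟨i, hi⟩)) (ytil t i ω)
                  - fderiv ℝ (fun z => f (i + 1) z (wseq t ω ⟨i, hi⟩)) (y t i ω)))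
                (v t (i + 1) ω)
              + ε t (i + 1) ω := by
          rw [hbwdp t ω i h1i hi, hbwd t ω i h1i hi]
          simp only [map_sub, ContinuousLinearMap.sub_apply]
          abel
        have hb1 : ‖(ContinuousLinearMap.adjoint
              (fderiv ℝ (fun z => f (i + 1) z (wseq t ω ⟨i, hi⟩)) (ytil t i ω)))
              (vtil t (i + 1) ω - v t (i + 1) ω)‖ ≤ Cf * (M * k * (Cf + 1) ^ k) := by
          refine le_trans (adjoint_apply_le _ _) ?_
          exact mul_le_mul (hJ1 (i + 1) (by omega) (by omega) _ _)
            (ih (i + 1) (by omega) (by omega)) (norm_nonneg _) hCf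
        have hb2 : ‖(ContinuousLinearMap.adjoint
              (fderiv ℝ (fun z => f (i + 1) z (wseq t ω ⟨i, hi⟩)) (ytil t i ω)
                - fderiv ℝ (fun z => f (i + 1) z (wseq t ω ⟨i, hi⟩)) (y t i ω)))
              (v t (i + 1) ω)‖ ≤ (L1f * Ey) * Vb := by
          refine le_trans (adjoint_apply_le _ _) ?_
          have hop : ‖fderiv ℝ (fun z => f (i + 1) z (wseq t ω ⟨i, hi⟩)) (ytil t i ω)
              - fderiv ℝ (fun z => f (i + 1) z (wseq t ω ⟨i, hi⟩)) (y t i ω)‖ ≤ L1f * Ey := by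
            refine le_trans (opNorm_le_frobNorm _) ?_
            refine le_trans (hLipJ1 (i + 1) (by omega) (by omega) _ _ _) ?_
            have := cl1' i (by omega)
            nlinarith only [this, hL1f]
          exact mul_le_mul hop (cl2' (i + 1) (by omega) (by omega)) (norm_nonneg _)
            (by nlinarith only [hL1f, hEy0])
        have hb3 : ‖ε t (i + 1) ω‖ ≤ D := hεω (i + 1)
        have hq1 : (1:ℝ) ≤ (Cf + 1) ^ k := one_le_pow₀ (by linarith only [hCf])
        have hps : (Cf + 1) ^ (k + 1) = (Cf + 1) ^ k * (Cf + 1) := pow_succ _ _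
        have hkc : ((k : ℝ)) ≥ 0 := Nat.cast_nonneg k
        calc ‖vtil t i ω - v t i ω‖
            ≤ Cf * (M * k * (Cf + 1) ^ k) + (L1f * Ey) * Vb + D := by
              rw [hrec]
              refine le_trans (norm_add_le _ _) ?_
              refine le_trans (add_le_add_left (norm_add_le _ _) _) ?_
              exact add_le_add (add_le_add hb1 hb2) hb3
          _ ≤ M * (k + 1 : ℕ) * (Cf + 1) ^ (k + 1) := by
              rw [pow_succ]
              push_cast
              have hMq : (L1f * Ey) * Vb + D = M := by rw [hM_def]
              have p1 : 0 ≤ M * ((k:ℝ) * (Cf + 1) ^ k) :=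
                mul_nonneg hM0 (mul_nonneg hkc (by positivity))
              have p2 : 0 ≤ M * (Cf * (Cf + 1) ^ k) :=
                mul_nonneg hM0 (mul_nonneg hCf (by positivity))
              have p3 : 0 ≤ M * ((Cf + 1) ^ k - 1) :=
                mul_nonneg hM0 (by linarith only [hq1])
              nlinarith only [hMq, p1, p2, p3]
    have cl4 : ∀ j : Fin N, ‖(utS t ω - uS t ω) j‖ ≤ Ub := by
      intro j
      obtain ⟨i, hi⟩ := j
      have hsub : (utS t ω - uS t ω) ⟨i, hi⟩ = utS t ω ⟨i, hi⟩ - uS t ω ⟨i, hi⟩ := rfl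
      rw [hsub, hut t ω i hi, hu t ω i hi]
      have hrec : (ContinuousLinearMap.adjoint
            (fderiv ℝ (fun z => f (i + 1) (ytil t i ω) z) (wseq t ω ⟨i, hi⟩)))
            (vtil t (i + 1) ω)
          - (ContinuousLinearMap.adjoint
            (fderiv ℝ (fun z => f (i + 1) (y t i ω) z) (wseq t ω ⟨i, hi⟩)))
            (v t (i + 1) ω)
          = (ContinuousLinearMap.adjoint
              (fderiv ℝ (fun z => f (i + 1) (ytil t i ω) z) (wseq t ω ⟨i, hi⟩)))
              (vtil t (i + 1) ω - v t (i + 1) ω)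
            + (ContinuousLinearMap.adjoint
              (fderiv ℝ (fun z => f (i + 1) (ytil t i ω) z) (wseq t ω ⟨i, hi⟩)
                - fderiv ℝ (fun z => f (i + 1) (y t i ω) z) (wseq t ω ⟨i, hi⟩)))
              (v t (i + 1) ω) := by
        simp only [map_sub, ContinuousLinearMap.sub_apply]
        abel
      rw [hrec]
      have hvb : ‖vtil t (i + 1) ω - v t (i + 1) ω‖ ≤ Evb := by
        refine (cl3 (N - (i + 1)) (i + 1) (by omega) (by omega)).trans ?_
        rw [hEvb_def]
        have hm1 : ((N - (i + 1) : ℕ) : ℝ) ≤ (N : ℝ) := by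
          exact_mod_cast Nat.sub_le N (i + 1)
        have hm2 : (Cf + 1) ^ (N - (i + 1)) ≤ (Cf + 1) ^ N :=
          pow_le_pow_right₀ (by linarith only [hCf]) (by omega)
        have hm3 : (0:ℝ) ≤ (Cf + 1) ^ (N - (i + 1)) := by positivity
        calc M * ((N - (i + 1) : ℕ) : ℝ) * (Cf + 1) ^ (N - (i + 1))
            ≤ M * (N : ℝ) * (Cf + 1) ^ (N - (i + 1)) :=
              mul_le_mul_of_nonneg_right (mul_le_mul_of_nonneg_left hm1 hM0) hm3
          _ ≤ M * (N : ℝ) * (Cf + 1) ^ N :=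
              mul_le_mul_of_nonneg_left hm2 (mul_nonneg hM0 (Nat.cast_nonneg N))
      have hb1 : ‖(ContinuousLinearMap.adjoint
            (fderiv ℝ (fun z => f (i + 1) (ytil t i ω) z) (wseq t ω ⟨i, hi⟩)))
            (vtil t (i + 1) ω - v t (i + 1) ω)‖ ≤ Cf * Evb := by
        refine le_trans (adjoint_apply_le _ _) ?_
        exact mul_le_mul (hJ2 (i + 1) (by omega) (by omega) _ _) hvb (norm_nonneg _) hCf
      have hb2 : ‖(ContinuousLinearMap.adjoint
            (fderiv ℝ (fun z => f (i + 1) (ytil t i ω) z) (wseq t ω ⟨i, hi⟩)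
              - fderiv ℝ (fun z => f (i + 1) (y t i ω) z) (wseq t ω ⟨i, hi⟩)))
            (v t (i + 1) ω)‖ ≤ (L1f * Ey) * Vb := by
        refine le_trans (adjoint_apply_le _ _) ?_
        have hop : ‖fderiv ℝ (fun z => f (i + 1) (ytil t i ω) z) (wseq t ω ⟨i, hi⟩)
            - fderiv ℝ (fun z => f (i + 1) (y t i ω) z) (wseq t ω ⟨i, hi⟩)‖ ≤ L1f * Ey := by
          refine le_trans (opNorm_le_frobNorm _) ?_
          refine le_trans (hLipJ2 (i + 1) (by omega) (by omega) _ _ _) ?_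
          have := cl1' i (by omega)
          nlinarith only [this, hL1f]
        exact mul_le_mul hop (cl2' (i + 1) (by omega) (by omega)) (norm_nonneg _)
          (by nlinarith only [hL1f, hEy0])
      rw [hUb_def]
      exact le_trans (norm_add_le _ _) (add_le_add hb1 hb2)
    have hnormsq : ‖utS t ω - uS t ω‖ ^ 2 = ∑ j, ‖(utS t ω - uS t ω) j‖ ^ 2 :=
      PiLp.norm_sq_eq_of_L2 _ _
    rw [hnormsq, hB2_def]
    calc ∑ j, ‖(utS t ω - uS t ω) j‖ ^ 2 ≤ ∑ _j : Fin N, Ub ^ 2 :=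
          Finset.sum_le_sum fun j _ => by
            have h := cl4 j
            nlinarith only [h, norm_nonneg ((utS t ω - uS t ω) j), hUb0]
      _ = N * Ub ^ 2 := by
          rw [Finset.sum_const, Finset.card_univ, Fintype.card_fin, nsmul_eq_mul]
  have heB2 : ∀ t, ∫ ω, ‖utS t ω - uS t ω‖ ^ 2 ∂μ ≤ B2 := by
    intro t
    have hae : ∀ᵐ ω ∂μ, ‖utS t ω - uS t ω‖ ^ 2 ≤ B2 := by
      filter_upwards [haebd] with ω hω
      exact hdet t ω (fun i => (hω t i).1) (fun i => (hω t i).2)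
    calc ∫ ω, ‖utS t ω - uS t ω‖ ^ 2 ∂μ ≤ ∫ _ω, B2 ∂μ :=
          integral_mono_ae (hIe_int t) (integrable_const _) hae
      _ = B2 := by simp [measure_univ]
  -- steps without perturbation incur no error
  set Dirty : Finset ℕ := (Sδ ∪ Sε).image Prod.fst with hDirty_def
  have hclean : ∀ t, t < T → t ∉ Dirty → ∀ ω, utS t ω = uS t ω := by
    intro t htT htD ω
    have hδ0 : ∀ i, 1 ≤ i → i ≤ N → δ t i ω = 0 := by
      intro i h1 h2
      refine hSδ t i htT h1 h2 (fun hmem => ?_) ω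
      exact htD (Finset.mem_image.2 ⟨(t, i), Finset.mem_union_left _ hmem, rfl⟩)
    have hε0 : ∀ i, 2 ≤ i → i ≤ N → ε t i ω = 0 := by
      intro i h1 h2
      refine hSε t i htT h1 h2 (fun hmem => ?_) ω
      exact htD (Finset.mem_image.2 ⟨(t, i), Finset.mem_union_right _ hmem, rfl⟩)
    have cy : ∀ i, i ≤ N → ytil t i ω = y t i ω := by
      intro i
      induction i with
      | zero => intro _; exact hy0 t ω
      | succ i ih =>
        intro h
        have hi : i < N := by omega
        rw [hfwdp t ω i hi, hfwd t ω i hi, ih (by omega), hδ0 (i + 1) (by omega) (by omega),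
          add_zero]
    have cv : ∀ k i, i + k = N → 1 ≤ i → vtil t i ω = v t i ω := by
      intro k
      induction k with
      | zero =>
        intro i hik _
        obtain rfl : i = N := by omega
        ext j
        rw [hvtilN t ω j, hvN t ω j]
      | succ k ih =>
        intro i hik h1
        have hi : i < N := by omega
        rw [hbwdp t ω i h1 hi, hbwd t ω i h1 hi, ih (i + 1) (by omega) (by omega),
          cy i (by omega), hε0 (i + 1) (by omega) (by omega), add_zero]
    refine PiLp.ext fun j => ?_
    obtain ⟨i, hi⟩ := j
    rw [hut t ω i hi, hu t ω i hi, cy i (by omega), cv (N - (i + 1)) (i + 1) (by omega)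
      (by omega)]
  have hclean0 : ∀ t, t < T → t ∉ Dirty → ∫ ω, ‖utS t ω - uS t ω‖ ^ 2 ∂μ = 0 := by
    intro t h1 h2
    have hz : ∀ ω, ‖utS t ω - uS t ω‖ ^ 2 = (0:ℝ) := by
      intro ω
      rw [hclean t h1 h2 ω, sub_self, norm_zero]
      ring
    simp only [hz, integral_zero]
  -- total error over the horizon
  have hEsum : ∑ t ∈ Finset.range T, ∫ ω, ‖utS t ω - uS t ω‖ ^ 2 ∂μ ≤ B2 * (2 * A * s) := by
    have hc1 : ((Finset.range T).filter (· ∈ Dirty)).card ≤ Dirty.card :=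
      Finset.card_le_card fun x hx => (Finset.mem_filter.1 hx).2
    have hc2 : Dirty.card ≤ Sδ.card + Sε.card :=
      le_trans Finset.card_image_le (Finset.card_union_le _ _)
    calc ∑ t ∈ Finset.range T, ∫ ω, ‖utS t ω - uS t ω‖ ^ 2 ∂μ
        ≤ ∑ t ∈ Finset.range T, (if t ∈ Dirty then B2 else 0) := by
          refine Finset.sum_le_sum fun t ht => ?_
          by_cases hd : t ∈ Dirty
          · simp only [hd, if_true]
            exact heB2 t
          · simp only [hd, if_false]
            rw [hclean0 t (Finset.mem_range.1 ht) hd]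
      _ = ∑ _t ∈ (Finset.range T).filter (· ∈ Dirty), B2 := (Finset.sum_filter _ _).symm
      _ = (((Finset.range T).filter (· ∈ Dirty)).card : ℝ) * B2 := by
          rw [Finset.sum_const, nsmul_eq_mul]
      _ ≤ ((Sδ.card : ℝ) + (Sε.card : ℝ)) * B2 := by
          refine mul_le_mul_of_nonneg_right ?_ hB20
          have : (((Finset.range T).filter (· ∈ Dirty)).card : ℝ)
              ≤ ((Sδ.card + Sε.card : ℕ) : ℝ) := by
            exact_mod_cast le_trans hc1 hc2
          push_cast at this
          linarith only [this]
      _ ≤ (A * s + A * s) * B2 := mul_le_mul_of_nonneg_right (add_le_add hQδ hQε) hB20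
      _ = B2 * (2 * A * s) := by ring
  -- telescoping sum of the per-step inequalities
  set S : ℝ := ∑ t ∈ Finset.range T, ∫ ω, ‖gradient ℓ (wseq t ω)‖ ^ 2 ∂μ with hS_def
  have hSnn : 0 ≤ S := Finset.sum_nonneg fun t _ => hIGnn t
  have hL0 : ∫ ω, ℓ (wseq 0 ω) ∂μ = ℓ w0 := by
    have hz : ∀ ω, ℓ (wseq 0 ω) = ℓ w0 := fun ω => by rw [hw0 ω]
    simp only [hz]
    simp [measure_univ]
  have hLT : lstar ≤ ∫ ω, ℓ (wseq T ω) ∂μ := by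
    have h0 : ∫ _ω, lstar ∂μ = lstar := by simp [measure_univ]
    rw [← h0]
    exact integral_mono (integrable_const _) (hℓint T) fun ω => hstar _
  have hkey : γ / 12 * S ≤ Δ₀ + 2 * γ * (B2 * (2 * A * s))
      + (T : ℝ) * (2 * Lgrad * γ ^ 2 * σ ^ 2) := by
    have hsum := Finset.sum_le_sum fun t (_ : t ∈ Finset.range T) => hstep t
    rw [← Finset.mul_sum, ← hS_def] at hsum
    have hsplit3 : ∑ t ∈ Finset.range T,
        ((∫ ω, ℓ (wseq t ω) ∂μ) - (∫ ω, ℓ (wseq (t + 1) ω) ∂μ)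
          + 2 * γ * (∫ ω, ‖utS t ω - uS t ω‖ ^ 2 ∂μ) + 2 * Lgrad * γ ^ 2 * σ ^ 2)
        = ((∫ ω, ℓ (wseq 0 ω) ∂μ) - (∫ ω, ℓ (wseq T ω) ∂μ))
          + 2 * γ * (∑ t ∈ Finset.range T, ∫ ω, ‖utS t ω - uS t ω‖ ^ 2 ∂μ)
          + (T : ℝ) * (2 * Lgrad * γ ^ 2 * σ ^ 2) := by
      rw [Finset.sum_add_distrib, Finset.sum_add_distrib,
        Finset.sum_range_sub' (fun t => ∫ ω, ℓ (wseq t ω) ∂μ) T, ← Finset.mul_sum,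
        Finset.sum_const, Finset.card_range, nsmul_eq_mul]
    rw [hsplit3] at hsum
    have hterm1 : (∫ ω, ℓ (wseq 0 ω) ∂μ) - (∫ ω, ℓ (wseq T ω) ∂μ) ≤ Δ₀ := by
      rw [hL0, ← hΔ]
      linarith only [hLT]
    have hterm2 : 2 * γ * (∑ t ∈ Finset.range T, ∫ ω, ‖utS t ω - uS t ω‖ ^ 2 ∂μ)
        ≤ 2 * γ * (B2 * (2 * A * s)) :=
      mul_le_mul_of_nonneg_left hEsum (by linarith only [hγpos])
    linarith only [hsum, hterm1, hterm2]
  -- final arithmetic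
  have hγs : γ * s ≤ 1 := by
    have := mul_le_mul_of_nonneg_right hγτ hspos.le
    linarith only [this, hτs]
  have hTγ2 : (T : ℝ) * γ ^ 2 ≤ 1 := by
    have h1 : γ ^ 2 ≤ τ ^ 2 := by nlinarith only [hγτ, hγpos, hτpos]
    have h2 : (T : ℝ) * γ ^ 2 ≤ (T : ℝ) * τ ^ 2 := mul_le_mul_of_nonneg_left h1 hTpos.le
    have h3 : (T : ℝ) * τ ^ 2 = 1 := by
      rw [← hss]
      nlinarith only [hτs]
    linarith only [h2, h3]
  have hkey12 : γ * S ≤ 12 * Δ₀ + 48 * γ * A * B2 * s + (T : ℝ) * (24 * Lgrad * γ ^ 2 * σ ^ 2)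
      := by linarith only [hkey]
  have h3Ls : (0:ℝ) ≤ 3 * Lgrad + s := by linarith only [hLgrad, hspos]
  have hstep1 : S ≤ (γ * S) * (3 * Lgrad + s) := by
    have h := mul_le_mul_of_nonneg_left h1γ hSnn
    calc S = S * 1 := by ring
      _ ≤ S * (γ * (3 * Lgrad + s)) := h
      _ = (γ * S) * (3 * Lgrad + s) := by ring
  have hstep2 : (γ * S) * (3 * Lgrad + s)
      ≤ (12 * Δ₀ + 48 * γ * A * B2 * s + (T : ℝ) * (24 * Lgrad * γ ^ 2 * σ ^ 2))
        * (3 * Lgrad + s) :=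
    mul_le_mul_of_nonneg_right hkey12 h3Ls
  have hstep3 : (12 * Δ₀ + 48 * γ * A * B2 * s + (T : ℝ) * (24 * Lgrad * γ ^ 2 * σ ^ 2))
      * (3 * Lgrad + s) ≤ (C - 1) * s := by
    have hCm1 : C - 1 = 36 * Lgrad * Δ₀ + 12 * Δ₀ + 96 * A * B2 + 72 * Lgrad ^ 2 * σ ^ 2
        + 24 * Lgrad * σ ^ 2 := by
      rw [hC_def]; ring
    rw [hCm1]
    have hABs : (0:ℝ) ≤ 48 * A * B2 * s :=
      mul_nonneg (mul_nonneg (mul_nonneg (by norm_num) hA.le) hB20) hspos.le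
    have p1 : (0:ℝ) ≤ (1 - γ * s) * (48 * A * B2 * s) :=
      mul_nonneg (by linarith only [hγs]) hABs
    have p2 : (0:ℝ) ≤ (1 - γ * (3 * Lgrad)) * (48 * A * B2 * s) :=
      mul_nonneg (by linarith only [hγL]) hABs
    have p3 : (0:ℝ) ≤ (1 - (T:ℝ) * γ ^ 2) * (72 * Lgrad ^ 2 * σ ^ 2) :=
      mul_nonneg (by linarith only [hTγ2]) (by positivity)
    have p4 : (0:ℝ) ≤ (1 - (T:ℝ) * γ ^ 2) * (24 * Lgrad * σ ^ 2 * s) :=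
      mul_nonneg (by linarith only [hTγ2])
        (mul_nonneg (by positivity) hspos.le)
    have p5 : (0:ℝ) ≤ (s - 1) * (36 * Lgrad * Δ₀) :=
      mul_nonneg (by linarith only [hs1]) (by positivity)
    have p6 : (0:ℝ) ≤ (s - 1) * (72 * Lgrad ^ 2 * σ ^ 2) :=
      mul_nonneg (by linarith only [hs1]) (by positivity)
    nlinarith only [p1, p2, p3, p4, p5, p6]
  have hSC : S ≤ C * s := by
    have := le_trans hstep1 (le_trans hstep2 hstep3)
    nlinarith only [this, hspos]
  have hs0 : s ≠ 0 := ne_of_gt hspos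
  have hfin : (1 / (T : ℝ)) * (C * s) = C * τ := by
    have hτ1 : τ = 1 / s := by
      rw [eq_div_iff hs0]
      exact hτs
    rw [hτ1, ← hss]
    field_simp
  calc (1 / (T : ℝ)) * S ≤ (1 / (T : ℝ)) * (C * s) :=
        mul_le_mul_of_nonneg_left hSC (by positivity)
    _ = C * τ := hfin
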